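/- If p ∈ Δ(K_A×K_B) is a product distribution, p = p_A ⊗ p_B (i.e., p^{(k_A,k_B)} = p_A^{k_A} · p_B^{k_B} for all (k_A,k_B)), then Cav(h)(p) = Cav(f_A)(p_A) + Cav(f_B)(p_B). -/

import Mathlib

open scoped BigOperators
open Finset MeasureTheory

noncomputable section

/-- The concavification `Cav(v)(p)`: pointwise smallest concave majorant of `v` on the simplex. -/
def cav {K : Type*} [Fintype K] (v : (K → ℝ) → ℝ) (p : K → ℝ) : ℝ :=
  sInf { y : ℝ | ∃ g : (K → ℝ) → ℝ,
    ConcaveOn ℝ (stdSimplex ℝ K) g ∧ (∀ q ∈ stdSimplex ℝ K, v q ≤ g q) ∧ y = g p }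

/-- Marginal on `K_A` of a vector indexed by `K_A × K_B`. -/
def margA {KA KB : Type*} [Fintype KB] (q : KA × KB → ℝ) : KA → ℝ :=
  fun a => ∑ b, q (a, b)

/-- Marginal on `K_B` of a vector indexed by `K_A × K_B`. -/
def margB {KA KB : Type*} [Fintype KA] (q : KA × KB → ℝ) : KB → ℝ :=
  fun b => ∑ a, q (a, b)

end

section Aux

variable {K : Type*} [Fintype K]

/-- `g` is a concave majorant of `v` on the simplex. -/
def IsMaj (v g : (K → ℝ) → ℝ) : Prop :=
  ConcaveOn ℝ (stdSimplex ℝ K) g ∧ ∀ q ∈ stdSimplex ℝ K, v q ≤ g q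

lemma aux_cav_le {v g : (K → ℝ) → ℝ} (hg : IsMaj v g) {p : K → ℝ}
    (hp : p ∈ stdSimplex ℝ K) : cav v p ≤ g p := by
  apply csInf_le
  · refine ⟨v p, ?_⟩
    rintro y ⟨g', hg', hmaj', rfl⟩
    exact hmaj' p hp
  · exact ⟨g, hg.1, hg.2, rfl⟩

lemma aux_le_cav {v : (K → ℝ) → ℝ} {c : ℝ} {p : K → ℝ} (hex : ∃ g, IsMaj v g)
    (hc : ∀ g, IsMaj v g → c ≤ g p) : c ≤ cav v p := by
  obtain ⟨g0, hg0⟩ := hex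
  refine le_csInf ⟨g0 p, g0, hg0.1, hg0.2, rfl⟩ ?_
  rintro y ⟨g, h1, h2, rfl⟩
  exact hc g ⟨h1, h2⟩

lemma aux_maj_exists {v : (K → ℝ) → ℝ} (hv : ContinuousOn v (stdSimplex ℝ K)) :
    ∃ g, IsMaj v g := by
  obtain ⟨C, hC⟩ := (isCompact_stdSimplex ℝ K).bddAbove_image hv
  exact ⟨fun _ => C, concaveOn_const C (convex_stdSimplex ℝ K),
    fun q hq => hC ⟨q, hq, rfl⟩⟩

lemma aux_v_le_cav {v : (K → ℝ) → ℝ} {p : K → ℝ} (hex : ∃ g, IsMaj v g)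
    (hp : p ∈ stdSimplex ℝ K) : v p ≤ cav v p :=
  aux_le_cav hex (fun _ hg => hg.2 p hp)

lemma aux_cav_concave {v : (K → ℝ) → ℝ} (hex : ∃ g, IsMaj v g) :
    ConcaveOn ℝ (stdSimplex ℝ K) (cav v) := by
  refine ⟨convex_stdSimplex ℝ K, fun x hx y hy a b ha hb hab => ?_⟩
  refine aux_le_cav hex (fun g hg => ?_)
  calc a • cav v x + b • cav v y
      ≤ a • g x + b • g y :=
        add_le_add (smul_le_smul_of_nonneg_left (aux_cav_le hg hx) ha)
          (smul_le_smul_of_nonneg_left (aux_cav_le hg hy) hb)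
    _ ≤ g (a • x + b • y) := hg.1.2 hx hy ha hb hab

lemma aux_concave_comp {K' : Type*} [Fintype K'] {g : (K' → ℝ) → ℝ}
    (hg : ConcaveOn ℝ (stdSimplex ℝ K') g) {L : (K → ℝ) → (K' → ℝ)}
    (hL : ∀ (a b : ℝ) (x y : K → ℝ), L (a • x + b • y) = a • L x + b • L y)
    (hmap : ∀ q ∈ stdSimplex ℝ K, L q ∈ stdSimplex ℝ K') :
    ConcaveOn ℝ (stdSimplex ℝ K) (fun q => g (L q)) := by
  refine ⟨convex_stdSimplex ℝ K, fun x hx y hy a b ha hb hab => ?_⟩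
  simp only
  rw [hL]
  exact hg.2 (hmap x hx) (hmap y hy) ha hb hab

end Aux

section Marg

variable {KA KB : Type*} [Fintype KA] [Fintype KB]

lemma margA_mem {q : KA × KB → ℝ} (hq : q ∈ stdSimplex ℝ (KA × KB)) :
    margA q ∈ stdSimplex ℝ KA := by
  refine ⟨fun a => Finset.sum_nonneg (fun b _ => hq.1 (a, b)), ?_⟩
  rw [show ∑ a, margA q a = ∑ kk : KA × KB, q kk from (Fintype.sum_prod_type _).symm]
  exact hq.2

lemma margB_mem {q : KA × KB → ℝ} (hq : q ∈ stdSimplex ℝ (KA × KB)) :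
    margB q ∈ stdSimplex ℝ KB := by
  refine ⟨fun b => Finset.sum_nonneg (fun a _ => hq.1 (a, b)), ?_⟩
  have h1 : ∑ b, margB q b = ∑ a, ∑ b, q (a, b) := Finset.sum_comm
  rw [h1, ← Fintype.sum_prod_type]
  exact hq.2

lemma margA_linear (a b : ℝ) (x y : KA × KB → ℝ) :
    margA (a • x + b • y) = a • margA x + b • margA y := by
  funext k
  simp [margA, Finset.sum_add_distrib, Finset.mul_sum]

lemma margB_linear (a b : ℝ) (x y : KA × KB → ℝ) :
    margB (a • x + b • y) = a • margB x + b • margB y := by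
  funext k
  simp [margB, Finset.sum_add_distrib, Finset.mul_sum]

lemma tensor_mem {qA : KA → ℝ} {qB : KB → ℝ} (hA : qA ∈ stdSimplex ℝ KA)
    (hB : qB ∈ stdSimplex ℝ KB) :
    (fun kk : KA × KB => qA kk.1 * qB kk.2) ∈ stdSimplex ℝ (KA × KB) := by
  refine ⟨fun kk => mul_nonneg (hA.1 kk.1) (hB.1 kk.2), ?_⟩
  rw [Fintype.sum_prod_type]
  simp only [← Finset.mul_sum, hB.2, mul_one]
  exact hA.2

lemma tensorR_linear (qA : KA → ℝ) (a b : ℝ) (x y : KB → ℝ) :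
    (fun kk : KA × KB => qA kk.1 * (a • x + b • y) kk.2)
      = a • (fun kk : KA × KB => qA kk.1 * x kk.2)
        + b • (fun kk : KA × KB => qA kk.1 * y kk.2) := by
  funext kk
  simp [mul_add]
  ring

lemma tensorL_linear (qB : KB → ℝ) (a b : ℝ) (x y : KA → ℝ) :
    (fun kk : KA × KB => (a • x + b • y) kk.1 * qB kk.2)
      = a • (fun kk : KA × KB => x kk.1 * qB kk.2)
        + b • (fun kk : KA × KB => y kk.1 * qB kk.2) := by
  funext kk
  simp [add_mul]
  ring

lemma margA_tensor {qA : KA → ℝ} {qB : KB → ℝ} (hB : qB ∈ stdSimplex ℝ KB) :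
    margA (fun kk : KA × KB => qA kk.1 * qB kk.2) = qA := by
  funext a
  simp only [margA, ← Finset.mul_sum, hB.2, mul_one]

lemma margB_tensor {qA : KA → ℝ} {qB : KB → ℝ} (hA : qA ∈ stdSimplex ℝ KA) :
    margB (fun kk : KA × KB => qA kk.1 * qB kk.2) = qB := by
  funext b
  simp only [margB, ← Finset.sum_mul, hA.2, one_mul]

end Marg

/-- if `p ∈ Δ(K_A×K_B)` is a product distribution `p = p_A ⊗ p_B`, then
`Cav(h)(p) = Cav(f_A)(p_A) + Cav(f_B)(p_B)`, where `h(q) = f_A(q_A) + f_B(q_B)`. -/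
theorem stmt_9 {KA KB : Type*} [Fintype KA] [Fintype KB]
    (fA : (KA → ℝ) → ℝ) (fB : (KB → ℝ) → ℝ)
    (hfA : ContinuousOn fA (stdSimplex ℝ KA)) (hfB : ContinuousOn fB (stdSimplex ℝ KB))
    (p : KA × KB → ℝ) (hp : p ∈ stdSimplex ℝ (KA × KB))
    (hprod : p = fun kk => margA p kk.1 * margB p kk.2) :
    cav (fun q : KA × KB → ℝ => fA (margA q) + fB (margB q)) p
      = cav fA (margA p) + cav fB (margB p) := by
  have hpAmem : margA p ∈ stdSimplex ℝ KA := margA_mem hp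
  have hpBmem : margB p ∈ stdSimplex ℝ KB := margB_mem hp
  have hexA : ∃ g, IsMaj fA g := aux_maj_exists hfA
  have hexB : ∃ g, IsMaj fB g := aux_maj_exists hfB
  have hexH : ∃ g, IsMaj (fun q : KA × KB → ℝ => fA (margA q) + fB (margB q)) g := by
    obtain ⟨gA, hgA⟩ := hexA
    obtain ⟨gB, hgB⟩ := hexB
    refine ⟨fun q => gA (margA q) + gB (margB q), ?_, ?_⟩
    · exact (aux_concave_comp hgA.1 margA_linear (fun q hq => margA_mem hq)).add
        (aux_concave_comp hgB.1 margB_linear (fun q hq => margB_mem hq))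
    · intro q hq
      exact add_le_add (hgA.2 _ (margA_mem hq)) (hgB.2 _ (margB_mem hq))
  apply le_antisymm
  · have hmaj : IsMaj (fun q : KA × KB → ℝ => fA (margA q) + fB (margB q))
        (fun q => cav fA (margA q) + cav fB (margB q)) := by
      constructor
      · exact (aux_concave_comp (aux_cav_concave hexA) margA_linear
            (fun q hq => margA_mem hq)).add
          (aux_concave_comp (aux_cav_concave hexB) margB_linear
            (fun q hq => margB_mem hq))
      · intro q hq
        exact add_le_add (aux_v_le_cav hexA (margA_mem hq)) (aux_v_le_cav hexB (margB_mem hq))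
    exact aux_cav_le hmaj hp
  · refine aux_le_cav hexH (fun g hg => ?_)
    -- step 1 : for every qA in the simplex, g(qA ⊗ pB) ≥ fA qA + cav fB pB
    have step1 : ∀ qA ∈ stdSimplex ℝ KA,
        fA qA + cav fB (margB p) ≤ g (fun kk => qA kk.1 * margB p kk.2) := by
      intro qA hqA
      have hmajB : IsMaj fB (fun qB => g (fun kk => qA kk.1 * qB kk.2) - fA qA) := by
        constructor
        · have h1 := aux_concave_comp hg.1 (tensorR_linear qA)
            (fun qB hqB => tensor_mem hqA hqB)
          have h2 := h1.add (concaveOn_const (-fA qA) (convex_stdSimplex ℝ KB))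
          simpa [sub_eq_add_neg, Pi.add_def] using h2
        · intro qB hqB
          have h1 := hg.2 _ (tensor_mem hqA hqB)
          simp only [margA_tensor hqB, margB_tensor hqA] at h1
          show fB qB ≤ g (fun kk => qA kk.1 * qB kk.2) - fA qA
          linarith
      have := aux_cav_le hmajB hpBmem
      linarith
    have hmajA : IsMaj fA
        (fun qA => g (fun kk => qA kk.1 * margB p kk.2) - cav fB (margB p)) := by
      constructor
      · have h1 := aux_concave_comp hg.1 (tensorL_linear (margB p))
          (fun qA hqA => tensor_mem hqA hpBmem)
        have h2 := h1.add (concaveOn_const (-cav fB (margB p)) (convex_stdSimplex ℝ KA))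
        simpa [sub_eq_add_neg, Pi.add_def] using h2
      · intro qA hqA
        show fA qA ≤ g (fun kk => qA kk.1 * margB p kk.2) - cav fB (margB p)
        linarith [step1 qA hqA]
    have hfin := aux_cav_le hmajA hpAmem
    rw [show (fun kk : KA × KB => margA p kk.1 * margB p kk.2) = p from hprod.symm] at hfin
    linarith
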